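/- Let C ⊆ 𝔽_2^n be a binary linear code of dimension k ≥ 1, full-length (every coordinate lies in the support of some codeword), such that every nonzero codeword has Hamming weight exactly 2^m for a fixed m. Then n = (2^k − 1) · 2^{m − k + 1}, and in particular k ≤ m + 1. -/

import Mathlib

private lemma zmod2_add_ne (a b : ZMod 2) (hb : b ≠ 0) : a + b = 0 ↔ a ≠ 0 := by
  revert a b; decide

/-- A full-length binary linear code of dimension `k ≥ 1` all of whose nonzero codewords
have Hamming weight exactly `2^m` satisfies `n = (2^k − 1) · 2^(m−k+1)`; in particular
`k ≤ m + 1`. -/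
theorem stmt3 (n k m : ℕ) (C : Submodule (ZMod 2) (Fin n → ZMod 2))
    (hk : Module.finrank (ZMod 2) C = k) (hk1 : 1 ≤ k)
    (hfull : ∀ i : Fin n, ∃ c ∈ C, c i ≠ 0)
    (hw : ∀ c ∈ C, c ≠ 0 → hammingNorm c = 2 ^ m) :
    n = (2 ^ k - 1) * 2 ^ (m + 1 - k) ∧ k ≤ m + 1 := by
  classical
  haveI : Fintype C := Fintype.ofFinite C
  have hcard : Fintype.card C = 2 ^ k := by
    rw [Module.card_eq_pow_finrank (K := ZMod 2) (V := C), ZMod.card, hk]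
  -- fiber count
  have hfiber : ∀ i : Fin n,
      (Finset.univ.filter (fun c : C => (c : Fin n → ZMod 2) i ≠ 0)).card = 2 ^ (k - 1) := by
    intro i
    obtain ⟨c0, hc0C, hc0⟩ := hfull i
    set c₀ : C := ⟨c0, hc0C⟩ with hc₀
    have hswap : (Finset.univ.filter (fun c : C => (c : Fin n → ZMod 2) i ≠ 0)).card
        = (Finset.univ.filter (fun c : C => (c : Fin n → ZMod 2) i = 0)).card := by
      apply Finset.card_bij' (fun c _ => c + c₀) (fun c _ => c + c₀)
      · intro a ha
        simp only [Finset.mem_filter, Finset.mem_univ, true_and] at ha ⊢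
        have : ((a + c₀ : C) : Fin n → ZMod 2) i = (a : Fin n → ZMod 2) i + c0 i := rfl
        rw [this, zmod2_add_ne _ _ hc0]
        simpa using ha
      · intro a ha
        simp only [Finset.mem_filter, Finset.mem_univ, true_and] at ha ⊢
        have heq : ((a + c₀ : C) : Fin n → ZMod 2) i = (a : Fin n → ZMod 2) i + c0 i := rfl
        rw [heq, ha, zero_add]
        exact hc0
      · intro a _
        have h2 : c₀ + c₀ = 0 := by
          rw [← two_smul (ZMod 2) c₀, show (2 : ZMod 2) = 0 from rfl, zero_smul]
        rw [add_assoc, h2, add_zero]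
      · intro a _
        have h2 : c₀ + c₀ = 0 := by
          rw [← two_smul (ZMod 2) c₀, show (2 : ZMod 2) = 0 from rfl, zero_smul]
        rw [add_assoc, h2, add_zero]
    have htot := Finset.card_filter_add_card_filter_not
      (s := (Finset.univ : Finset C)) (p := fun c : C => (c : Fin n → ZMod 2) i ≠ 0)
    rw [Finset.card_univ, hcard] at htot
    have hne : (Finset.univ.filter (fun c : C => ¬ (c : Fin n → ZMod 2) i ≠ 0))
        = (Finset.univ.filter (fun c : C => (c : Fin n → ZMod 2) i = 0)) := by
      apply Finset.filter_congr; intro c _; simp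
    rw [hne, ← hswap] at htot
    have hpow : 2 ^ k = 2 * 2 ^ (k - 1) := by
      conv_lhs => rw [show k = (k - 1) + 1 by omega]
      ring
    omega
  -- double counting
  have hsum1 : ∑ c : C, hammingNorm (c : Fin n → ZMod 2) = n * 2 ^ (k - 1) := by
    have h1 : ∀ c : C, hammingNorm (c : Fin n → ZMod 2)
        = ∑ i : Fin n, if (c : Fin n → ZMod 2) i ≠ 0 then 1 else 0 := by
      intro c
      rw [hammingNorm, Finset.card_filter]
    calc ∑ c : C, hammingNorm (c : Fin n → ZMod 2)
        = ∑ c : C, ∑ i : Fin n, if (c : Fin n → ZMod 2) i ≠ 0 then 1 else 0 := by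
          exact Finset.sum_congr rfl fun c _ => h1 c
      _ = ∑ i : Fin n, ∑ c : C, if (c : Fin n → ZMod 2) i ≠ 0 then 1 else 0 :=
          Finset.sum_comm
      _ = ∑ i : Fin n, 2 ^ (k - 1) := by
          refine Finset.sum_congr rfl fun i _ => ?_
          rw [← Finset.card_filter, hfiber i]
      _ = n * 2 ^ (k - 1) := by
          rw [Finset.sum_const, Finset.card_univ, Fintype.card_fin, smul_eq_mul]
  have hsum2 : ∑ c : C, hammingNorm (c : Fin n → ZMod 2) = (2 ^ k - 1) * 2 ^ m := by
    rw [← Finset.add_sum_erase Finset.univ _ (Finset.mem_univ (0 : C))]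
    have h0 : hammingNorm ((0 : C) : Fin n → ZMod 2) = 0 := by
      simp [hammingNorm]
    rw [h0, zero_add]
    have : ∀ c ∈ Finset.univ.erase (0 : C),
        hammingNorm (c : Fin n → ZMod 2) = 2 ^ m := by
      intro c hc
      have hcne : c ≠ 0 := (Finset.mem_erase.mp hc).1
      exact hw c c.2 (by simpa using Subtype.coe_ne_coe.mpr hcne)
    rw [Finset.sum_congr rfl this, Finset.sum_const,
      Finset.card_erase_of_mem (Finset.mem_univ _), Finset.card_univ, hcard, smul_eq_mul]
  have E : n * 2 ^ (k - 1) = (2 ^ k - 1) * 2 ^ m := by rw [← hsum1, hsum2]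
  have hcop : Nat.Coprime (2 ^ (k - 1)) (2 ^ k - 1) := by
    apply Nat.Coprime.pow_left
    rw [Nat.prime_two.coprime_iff_not_dvd]
    intro hdv
    obtain ⟨t, ht⟩ := hdv
    have h2k : 2 ∣ 2 ^ k := dvd_pow_self 2 (by omega)
    obtain ⟨s, hs⟩ := h2k
    have : 1 ≤ 2 ^ k := Nat.one_le_two_pow
    omega
  have hdvd : 2 ^ (k - 1) ∣ 2 ^ m := by
    have : 2 ^ (k - 1) ∣ (2 ^ k - 1) * 2 ^ m := ⟨n, by rw [← E]; ring⟩
    exact (Nat.Coprime.dvd_of_dvd_mul_left hcop this)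
  have hkm : k - 1 ≤ m := (Nat.pow_dvd_pow_iff_le_right one_lt_two).mp hdvd
  have hk2 : k ≤ m + 1 := by omega
  refine ⟨?_, hk2⟩
  have hsplit : 2 ^ m = 2 ^ (m + 1 - k) * 2 ^ (k - 1) := by
    rw [← pow_add]; congr 1; omega
  apply Nat.eq_of_mul_eq_mul_right (pow_pos (by norm_num : (0:ℕ) < 2) (k - 1) : 0 < 2 ^ (k - 1))
  rw [E, hsplit]; ring
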